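/- Prim's algorithm sorts vertices by Minimax distance from the start vertex: if vertices v = u_0, u_1, ..., u_{N-1} are listed in the order in which Prim's algorithm (started at v) adds them to the spanning tree of a connected weighted graph, then the sequence of Minimax distances D^MM(v, u_1) ≤ D^MM(v, u_2) ≤ ... ≤ D^MM(v, u_{N-1}) is nondecreasing, and moreover D^MM(v, u_T) equals the weight of the largest edge added by Prim's algorithm up to and including step T. -/
import Mathlib


/-- Maximum edge weight along the path `i, p..., j` (the path through the
intermediate vertices listed in `p`). -/
def chainMax {O : Type*} (D : O → O → ℝ) : O → List O → O → ℝ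
  | i, [], j => D i j
  | i, k :: l, j => max (D i k) (chainMax D k l j)

/-- Minimax distance: the minimum over all paths from `i` to `j` (in the
complete graph on `O`) of the maximal edge weight along the path. -/
noncomputable def minimax {O : Type*} (D : O → O → ℝ) (i j : O) : ℝ :=
  sInf {m : ℝ | ∃ p : List O, m = chainMax D i p j}


/-- Weight of the edge that attaches `u T` to the already-built tree
`{u 0, …, u (T-1)}` in Prim's algorithm (minimum-weight connecting edge). -/
noncomputable def primAddedWeight {N : ℕ} (D : Fin N → Fin N → ℝ)
    (u : Fin N → Fin N) (T : Fin N) : ℝ :=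
  sInf {w : ℝ | ∃ s : Fin N, s < T ∧ w = D (u s) (u T)}

lemma chainMax_append {O : Type*} (D : O → O → ℝ) (k j : O) :
    ∀ (p : List O) (i : O), chainMax D i (p ++ [k]) j = max (chainMax D i p k) (D k j) := by
  intro p
  induction p with
  | nil => intro i; simp [chainMax]
  | cons a l ih => intro i; simp [chainMax, ih, max_assoc]

lemma chainMax_nonneg {O : Type*} {D : O → O → ℝ} (hD : ∀ x y, 0 ≤ D x y) :
    ∀ (p : List O) (i j : O), 0 ≤ chainMax D i p j := by
  intro p
  induction p with
  | nil => intro i j; exact hD i j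
  | cons a l ih => intro i j; exact le_trans (hD i a) (le_max_left _ _)

lemma chainMax_cross {O : Type*} (D : O → O → ℝ) (A : Set O) :
    ∀ (p : List O) (i j : O), i ∈ A → j ∉ A →
      ∃ x y, x ∈ A ∧ y ∉ A ∧ D x y ≤ chainMax D i p j := by
  intro p
  induction p with
  | nil => intro i j hi hj; exact ⟨i, j, hi, hj, le_refl _⟩
  | cons a l ih =>
    intro i j hi hj
    by_cases ha : a ∈ A
    · obtain ⟨x, y, hx, hy, hle⟩ := ih a j ha hj
      exact ⟨x, y, hx, hy, hle.trans (le_max_right _ _)⟩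
    · exact ⟨i, a, hi, ha, le_max_left _ _⟩

lemma finite_of_image {α : Type*} [Finite α] (f : α → ℝ) (P : α → Prop) :
    {w : ℝ | ∃ s, P s ∧ w = f s}.Finite := by
  have h : {w : ℝ | ∃ s, P s ∧ w = f s} = f '' {s | P s} := by
    ext w
    constructor
    · rintro ⟨s, hs, rfl⟩; exact ⟨s, hs, rfl⟩
    · rintro ⟨s, hs, rfl⟩; exact ⟨s, hs, rfl⟩
  rw [h]; exact (Set.toFinite _).image _

theorem prim_sorts_by_minimax {N : ℕ} (D : Fin N → Fin N → ℝ)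
    (hsym : ∀ i j, D i j = D j i) (hpos : ∀ i j, i ≠ j → 0 < D i j)
    (hdiag : ∀ i, D i i = 0)
    (v : Fin N) (u : Fin N → Fin N) (hbij : Function.Bijective u)
    (h0 : 0 < N) (hu0 : u ⟨0, h0⟩ = v)
    -- Prim's greedy property: at each step the attached vertex has the
    -- minimum-weight edge to the current tree among all outside vertices.
    (hprim : ∀ T : Fin N, 0 < (T : ℕ) → ∀ q : Fin N,
      (∀ s : Fin N, s < T → u s ≠ q) →
      sInf {w : ℝ | ∃ s : Fin N, s < T ∧ w = D (u s) (u T)} ≤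
        sInf {w : ℝ | ∃ s : Fin N, s < T ∧ w = D (u s) q}) :
    (∀ T T' : Fin N, 0 < (T : ℕ) → T ≤ T' →
      minimax D v (u T) ≤ minimax D v (u T')) ∧
    (∀ T : Fin N, 0 < (T : ℕ) →
      minimax D v (u T) =
        sSup {w : ℝ | ∃ s : Fin N, 0 < (s : ℕ) ∧ s ≤ T ∧ w = primAddedWeight D u s}) := by
  have hinj := hbij.injective
  have hDnn : ∀ x y : Fin N, 0 ≤ D x y := by
    intro x y
    rcases eq_or_ne x y with h | h
    · simp [h, hdiag]
    · exact (hpos x y h).le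
  set F : Fin N → Set ℝ :=
    fun T => {w : ℝ | ∃ s : Fin N, 0 < (s : ℕ) ∧ s ≤ T ∧ w = primAddedWeight D u s} with hFdef
  have hFfin : ∀ T, (F T).Finite := by
    intro T
    have h : F T = {w : ℝ | ∃ s : Fin N, (0 < (s : ℕ) ∧ s ≤ T) ∧ w = primAddedWeight D u s} := by
      ext w; simp [hFdef, and_assoc]
    rw [h]
    exact finite_of_image _ _
  have hFne : ∀ T : Fin N, 0 < (T : ℕ) → (F T).Nonempty :=
    fun T hT => ⟨_, T, hT, le_refl T, rfl⟩
  have hFsub : ∀ T T' : Fin N, T ≤ T' → F T ⊆ F T' := by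
    rintro T T' hTT' w ⟨s, hs, hsT, hw⟩
    exact ⟨s, hs, hsT.trans hTT', hw⟩
  -- parent of T in the Prim tree
  have hparent : ∀ T : Fin N, 0 < (T : ℕ) →
      ∃ s : Fin N, s < T ∧ primAddedWeight D u T = D (u s) (u T) := by
    intro T hT
    have hne : {w : ℝ | ∃ s : Fin N, s < T ∧ w = D (u s) (u T)}.Nonempty :=
      ⟨_, ⟨0, h0⟩, by simpa [Fin.lt_def] using hT, rfl⟩
    have hmem := hne.csInf_mem (finite_of_image (fun s => D (u s) (u T)) (fun s => s < T))
    obtain ⟨s, hs, heq⟩ := hmem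
    exact ⟨s, hs, heq⟩
  -- lower bound: each added weight up to T is ≤ every chain max from v to u T
  have key_low : ∀ T s : Fin N, 0 < (s : ℕ) → s ≤ T → ∀ p : List (Fin N),
      primAddedWeight D u s ≤ chainMax D v p (u T) := by
    intro T s hs hsT p
    set A : Set (Fin N) := {x | ∃ a : Fin N, a < s ∧ u a = x} with hA
    have hvA : v ∈ A := ⟨⟨0, h0⟩, by simpa [Fin.lt_def] using hs, hu0⟩
    have hTA : u T ∉ A := by
      rintro ⟨a, ha, hau⟩
      have hat : a = T := hinj hau
      subst hat
      exact absurd (lt_of_lt_of_le ha hsT) (lt_irrefl _)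
    obtain ⟨x, y, hx, hy, hxy⟩ := chainMax_cross D A p v (u T) hvA hTA
    obtain ⟨a, ha, rfl⟩ := hx
    have hyq : ∀ r : Fin N, r < s → u r ≠ y := fun r hr hry => hy ⟨r, hr, hry⟩
    have h1 := hprim s hs y hyq
    have h2 : sInf {w : ℝ | ∃ r : Fin N, r < s ∧ w = D (u r) y} ≤ D (u a) y :=
      csInf_le (finite_of_image (fun r => D (u r) y) (fun r => r < s)).bddBelow ⟨a, ha, rfl⟩
    exact le_trans (le_trans h1 h2) hxy
  -- upper bound: there is a chain achieving at most the sup of added weights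
  have key_up : ∀ T : Fin N, 0 < (T : ℕ) →
      ∃ p : List (Fin N), chainMax D v p (u T) ≤ sSup (F T) := by
    have hind : ∀ n : ℕ, ∀ T : Fin N, (T : ℕ) ≤ n → 0 < (T : ℕ) →
        ∃ p : List (Fin N), chainMax D v p (u T) ≤ sSup (F T) := by
      intro n
      induction n with
      | zero => intro T hTn hT; omega
      | succ n ih =>
        intro T hTn hT
        obtain ⟨s, hsT, heq⟩ := hparent T hT
        have hwT : primAddedWeight D u T ≤ sSup (F T) :=
          le_csSup (hFfin T).bddAbove ⟨T, hT, le_refl _, rfl⟩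
        by_cases hs : 0 < (s : ℕ)
        · have hsn : (s : ℕ) ≤ n := by
            have := Fin.lt_def.mp hsT; omega
          obtain ⟨p, hp⟩ := ih s hsn hs
          refine ⟨p ++ [u s], ?_⟩
          rw [chainMax_append]
          refine max_le (hp.trans (csSup_le_csSup (hFfin T).bddAbove (hFne s hs)
            (hFsub s T hsT.le))) ?_
          rw [← heq]; exact hwT
        · have hsv : u s = v := by
            have hs0 : s = ⟨0, h0⟩ := Fin.ext (Nat.eq_zero_of_not_pos hs)
            rw [hs0, hu0]
          refine ⟨[], ?_⟩
          show D v (u T) ≤ sSup (F T)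
          rw [← hsv, ← heq]
          exact hwT
    intro T hT
    exact hind N T T.isLt.le hT
  have hbdd : ∀ j : Fin N, BddBelow {m : ℝ | ∃ p : List (Fin N), m = chainMax D v p j} := by
    intro j
    exact ⟨0, by rintro m ⟨p, rfl⟩; exact chainMax_nonneg hDnn p v j⟩
  have hmain : ∀ T : Fin N, 0 < (T : ℕ) → minimax D v (u T) = sSup (F T) := by
    intro T hT
    apply le_antisymm
    · obtain ⟨p, hp⟩ := key_up T hT
      exact le_trans (csInf_le (hbdd (u T)) ⟨p, rfl⟩) hp
    · refine le_csInf ⟨_, [], rfl⟩ ?_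
      rintro m ⟨p, rfl⟩
      refine csSup_le (hFne T hT) ?_
      rintro w ⟨s, hs, hsT, rfl⟩
      exact key_low T s hs hsT p
  constructor
  · intro T T' hT hTT'
    have hT' : 0 < (T' : ℕ) := lt_of_lt_of_le hT (Fin.le_def.mp hTT')
    rw [hmain T hT, hmain T' hT']
    exact csSup_le_csSup (hFfin T').bddAbove (hFne T hT) (hFsub T T' hTT')
  · exact hmain
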